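/- Let (X_n) be a stochastic process on a probability space (Ω, F, P) such that almost surely the sequence (X_n(ω)) is monotone, and suppose h : (0,1) → [1,∞) is a modulus of tightness for (X_n) (i.e., P(|X_n| ≥ h(λ)) < λ for all λ ∈ (0,1) and all n). Then φ(λ, ε) := (22/(λε)) · h(λ/2) is a learnable rate of uniform convergence for (X_n): for all λ, ε ∈ (0,1) and all naturals a_0 < b_0 ≤ a_1 < b_1 ≤ …, there exists n ≤ φ(λ, ε) with P(∃ i, j ∈ [a_n, b_n] with |X_i − X_j| ≥ ε) < λ. In particular, if sup_{n∈ℕ} ‖X_n‖_∞ < K for some K ≥ 1, then φ(λ, ε) := 22K/(λε) is a learnable rate of uniform convergence. -/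

import Mathlib

open MeasureTheory ENNReal

/-- telescoping -/
lemma tele14 (u v : ℕ → ℝ) (huv : ∀ n, u n ≤ v n) (hvu : ∀ n, v n ≤ u (n+1)) :
    ∀ l m : ℕ, l ≤ m → ∑ n ∈ Finset.Ico l m, (v n - u n) ≤ u m - u l := by
  intro l m hlm
  induction m, hlm using Nat.le_induction with
  | base => simp
  | succ m hlm ih =>
    rw [Finset.sum_Ico_succ_top hlm]
    have := huv m
    have := hvu m
    linarith

lemma count14 (u v : ℕ → ℝ) (huv : ∀ n, u n ≤ v n) (hvu : ∀ n, v n ≤ u (n+1))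
    (eps M : ℝ) (heps : 0 < eps) (hM : 0 ≤ M) (S : Finset ℕ)
    (hS : ∀ n ∈ S, eps ≤ v n - u n ∧ |u n| < M) :
    (S.card : ℝ) ≤ 2*M/eps + 1 := by
  rcases S.eq_empty_or_nonempty with rfl | hne
  · simp; positivity
  · set m := S.max' hne with hm
    set l := S.min' hne with hl
    have hsub : S.erase m ⊆ Finset.Ico l m := by
      intro n hn
      rw [Finset.mem_Ico]
      exact ⟨S.min'_le n (Finset.mem_of_mem_erase hn),
        lt_of_le_of_ne (S.le_max' n (Finset.mem_of_mem_erase hn)) (Finset.ne_of_mem_erase hn)⟩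
    have h1 : ((S.erase m).card : ℝ) * eps ≤ ∑ n ∈ S.erase m, (v n - u n) := by
      calc ((S.erase m).card : ℝ) * eps = ∑ _n ∈ S.erase m, eps := by
            rw [Finset.sum_const, nsmul_eq_mul]
        _ ≤ ∑ n ∈ S.erase m, (v n - u n) :=
            Finset.sum_le_sum fun n hn => (hS n (Finset.mem_of_mem_erase hn)).1
    have h2 : ∑ n ∈ S.erase m, (v n - u n) ≤ ∑ n ∈ Finset.Ico l m, (v n - u n) :=
      Finset.sum_le_sum_of_subset_of_nonneg hsub
        fun n _ _ => sub_nonneg.2 (huv n)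
    have h3 := tele14 u v huv hvu l m (S.min'_le m (S.max'_mem hne))
    have hum := (hS m (S.max'_mem hne)).2
    have hul := (hS l (S.min'_mem hne)).2
    have hum' := abs_lt.1 hum
    have hul' := abs_lt.1 hul
    have hcard : ((S.erase m).card : ℝ) ≤ 2*M/eps := by
      rw [le_div_iff₀ heps]
      linarith
    have : (S.erase m).card + 1 = S.card := Finset.card_erase_add_one (S.max'_mem hne)
    rw [← this]
    push_cast
    linarith

lemma aux14 {Ω : Type} [MeasurableSpace Ω] (μ : Measure Ω) [IsProbabilityMeasure μ]
    (X : ℕ → Ω → ℝ) (hX : ∀ n, Measurable (X n))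
    (hmono : ∀ᵐ ω ∂μ, (Monotone fun n => X n ω) ∨ (Antitone fun n => X n ω))
    (h : ℝ → ℝ) (hh1 : ∀ lam ∈ Set.Ioo (0 : ℝ) 1, 1 ≤ h lam)
    (htight : ∀ lam ∈ Set.Ioo (0 : ℝ) 1, ∀ n : ℕ,
      μ {ω | h lam ≤ |X n ω|} < ENNReal.ofReal lam) :
    ∀ lam ∈ Set.Ioo (0 : ℝ) 1, ∀ eps ∈ Set.Ioo (0 : ℝ) 1, ∀ a b : ℕ → ℕ,
      (∀ n, a n < b n) → (∀ n, b n ≤ a (n + 1)) →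
      ∃ n : ℕ, (n : ℝ) ≤ 22 / (lam * eps) * h (lam / 2) ∧
        μ {ω | ∃ i ∈ Set.Icc (a n) (b n), ∃ j ∈ Set.Icc (a n) (b n), eps ≤ |X i ω - X j ω|}
          < ENNReal.ofReal lam := by
  classical
  rintro lam ⟨hlam0, hlam1⟩ eps ⟨heps0, heps1⟩ a b hab hba
  have hlam2 : lam / 2 ∈ Set.Ioo (0:ℝ) 1 := ⟨by linarith, by linarith⟩
  set M : ℝ := h (lam / 2) with hMdef
  have hM1 : 1 ≤ M := hh1 _ hlam2
  have hM0 : 0 < M := by linarith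
  set c : ℝ := 2 * M / eps + 1 with hcdef
  have hc0 : 0 < c := by positivity
  set N : ℕ := ⌈2 * c / lam⌉₊ with hNdef
  have hNge : 2 * c / lam ≤ (N : ℝ) := Nat.le_ceil _
  have hNle : (N : ℝ) ≤ 2 * c / lam + 1 := le_of_lt (Nat.ceil_lt_add_one (by positivity))
  -- the bad sets
  set A : ℕ → Set Ω := fun n =>
    {ω | ∃ i ∈ Set.Icc (a n) (b n), ∃ j ∈ Set.Icc (a n) (b n), eps ≤ |X i ω - X j ω|} with hAdef
  set E : ℕ → Set Ω := fun n => A n ∩ {ω | |X (a n) ω| < M} with hEdef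
  have hAmeas : ∀ n, MeasurableSet (A n) := by
    intro n
    have : A n = ⋃ i ∈ Set.Icc (a n) (b n), ⋃ j ∈ Set.Icc (a n) (b n),
        {ω | eps ≤ |X i ω - X j ω|} := by
      ext ω
      simp only [hAdef, Set.mem_setOf_eq, Set.mem_iUnion, Set.mem_Icc, exists_prop]
    rw [this]
    exact MeasurableSet.biUnion (Set.to_countable _) fun i _ =>
      MeasurableSet.biUnion (Set.to_countable _) fun j _ =>
        measurableSet_le measurable_const ((hX i).sub (hX j)).abs
  have hEmeas : ∀ n, MeasurableSet (E n) :=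
    fun n => (hAmeas n).inter (measurableSet_lt (hX (a n)).abs measurable_const)
  -- pointwise counting bound
  have hpoint : ∀ᵐ ω ∂μ,
      (∑ n ∈ Finset.range (N+1), (E n).indicator (fun _ => (1:ℝ≥0∞)) ω) ≤ ENNReal.ofReal c := by
    filter_upwards [hmono] with ω hω
    have hsum : (∑ n ∈ Finset.range (N+1), (E n).indicator (fun _ => (1:ℝ≥0∞)) ω)
        = (((Finset.range (N+1)).filter (fun n => ω ∈ E n)).card : ℝ≥0∞) := by
      simp [Set.indicator_apply, Finset.sum_boole]
      convert (Finset.natCast_card_filter _ _).symm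
    rw [hsum, ← ENNReal.ofReal_natCast]
    apply ENNReal.ofReal_le_ofReal
    set S := (Finset.range (N+1)).filter (fun n => ω ∈ E n) with hSdef
    rcases hω with hmon | hant
    · refine count14 (fun n => X (a n) ω) (fun n => X (b n) ω)
        (fun n => hmon (hab n).le) (fun n => hmon (hba n)) eps M heps0 hM0.le S ?_
      intro n hn
      have hn' : ω ∈ E n := (Finset.mem_filter.1 hn).2
      obtain ⟨⟨i, hi, j, hj, hij⟩, habs⟩ := hn'
      refine ⟨?_, habs⟩
      have h1 : X (a n) ω ≤ X i ω := hmon hi.1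
      have h2 : X i ω ≤ X (b n) ω := hmon hi.2
      have h3 : X (a n) ω ≤ X j ω := hmon hj.1
      have h4 : X j ω ≤ X (b n) ω := hmon hj.2
      rcases abs_le.1 (le_refl |X i ω - X j ω|) with _
      rcases abs_sub_le_iff.1 (le_refl |X i ω - X j ω|) with ⟨_, _⟩
      calc eps ≤ |X i ω - X j ω| := hij
        _ ≤ X (b n) ω - X (a n) ω := abs_sub_le_iff.2 ⟨by linarith, by linarith⟩
    · refine count14 (fun n => -X (a n) ω) (fun n => -X (b n) ω)
        (fun n => neg_le_neg (hant (hab n).le)) (fun n => neg_le_neg (hant (hba n)))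
        eps M heps0 hM0.le S ?_
      intro n hn
      have hn' : ω ∈ E n := (Finset.mem_filter.1 hn).2
      obtain ⟨⟨i, hi, j, hj, hij⟩, habs⟩ := hn'
      refine ⟨?_, by simpa using habs⟩
      have h1 : X i ω ≤ X (a n) ω := hant hi.1
      have h2 : X (b n) ω ≤ X i ω := hant hi.2
      have h3 : X j ω ≤ X (a n) ω := hant hj.1
      have h4 : X (b n) ω ≤ X j ω := hant hj.2
      have : |X i ω - X j ω| ≤ X (a n) ω - X (b n) ω :=
        abs_sub_le_iff.2 ⟨by linarith, by linarith⟩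
      linarith [hij]
  -- sum of measures bound
  have hsumE : ∑ n ∈ Finset.range (N+1), μ (E n) ≤ ENNReal.ofReal c := by
    have h1 : ∀ n ∈ Finset.range (N+1), μ (E n)
        = ∫⁻ ω, (E n).indicator (fun _ => (1:ℝ≥0∞)) ω ∂μ :=
      fun n _ => (lintegral_indicator_one (hEmeas n)).symm
    rw [Finset.sum_congr rfl h1, ← lintegral_finset_sum _
      (fun n _ => (measurable_const.indicator (hEmeas n)))]
    calc ∫⁻ ω, (∑ n ∈ Finset.range (N+1), (E n).indicator (fun _ => (1:ℝ≥0∞)) ω) ∂μ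
        ≤ ∫⁻ _ω, ENNReal.ofReal c ∂μ := lintegral_mono_ae hpoint
      _ = ENNReal.ofReal c := by simp
  -- find good n
  have key : ∃ n ∈ Finset.range (N+1), μ (E n) ≤ ENNReal.ofReal (lam/2) := by
    by_contra hcon
    push_neg at hcon
    have hle : ∑ n ∈ Finset.range (N+1), ENNReal.ofReal (lam/2)
        ≤ ∑ n ∈ Finset.range (N+1), μ (E n) :=
      Finset.sum_le_sum fun i hi => (hcon i hi).le
    have heq : ∑ _n ∈ Finset.range (N+1), ENNReal.ofReal (lam/2)
        = ENNReal.ofReal ((N+1 : ℝ) * (lam/2)) := by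
      rw [Finset.sum_const, Finset.card_range, ENNReal.ofReal_mul (by positivity)]
      rw [nsmul_eq_mul]
      congr 1
      rw [← ENNReal.ofReal_natCast (N+1)]
      push_cast
      ring_nf
    have hclt : ENNReal.ofReal c < ENNReal.ofReal ((N+1:ℝ) * (lam/2)) := by
      apply (ENNReal.ofReal_lt_ofReal_iff (by positivity)).2
      have : 2 * c / lam * (lam/2) ≤ (N:ℝ) * (lam/2) :=
        mul_le_mul_of_nonneg_right hNge (by positivity)
      have h2 : 2 * c / lam * (lam/2) = c := by field_simp
      nlinarith
    rw [heq] at hle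
    exact absurd ((hclt.trans_le hle).trans_le hsumE) (lt_irrefl _)
  obtain ⟨n, hnmem, hEn⟩ := key
  refine ⟨n, ?_, ?_⟩
  · have hn' : (n : ℝ) ≤ N := by exact_mod_cast Nat.le_of_lt_succ (Finset.mem_range.1 hnmem)
    have hbound : 2 * c / lam + 1 ≤ 22 / (lam * eps) * M := by
      have h1 : (0:ℝ) < lam * eps := by positivity
      rw [hcdef, show (22:ℝ) / (lam * eps) * M = 22 * M / (lam * eps) by ring,
        le_div_iff₀ h1]
      have heq2 : (2 * (2 * M / eps + 1) / lam + 1) * (lam * eps)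
          = 4 * M + 2 * eps + lam * eps := by
        field_simp
        ring
      rw [heq2]
      nlinarith
    linarith
  · have htail := htight (lam/2) hlam2 (a n)
    have hsub : A n ⊆ E n ∪ {ω | h (lam/2) ≤ |X (a n) ω|} := by
      intro ω hω
      by_cases hc : |X (a n) ω| < M
      · exact Or.inl ⟨hω, hc⟩
      · exact Or.inr (not_lt.1 hc)
    calc μ (A n) ≤ μ (E n ∪ {ω | h (lam/2) ≤ |X (a n) ω|}) := measure_mono hsub
      _ ≤ μ (E n) + μ {ω | h (lam/2) ≤ |X (a n) ω|} := measure_union_le _ _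
      _ < ENNReal.ofReal (lam/2) + ENNReal.ofReal (lam/2) :=
          ENNReal.add_lt_add_of_le_of_lt (by finiteness) hEn htail
      _ = ENNReal.ofReal lam := by
          rw [← ENNReal.ofReal_add (by positivity) (by positivity)]
          ring_nf

/-- If the paths of `X` are almost surely monotone (nondecreasing or nonincreasing) and
`h : (0,1) → [1,∞)` is a modulus of tightness for `X`, then `φ(λ,ε) := (22/(λε))·h(λ/2)` is a
learnable rate of uniform convergence for `X`; and if moreover `sup_n ‖X n‖_∞ < K` for some
`K ≥ 1`, then `φ(λ,ε) := 22K/(λε)` is a learnable rate of uniform convergence. -/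
theorem stmt14 {Ω : Type} [MeasurableSpace Ω] (μ : Measure Ω) [IsProbabilityMeasure μ]
    (X : ℕ → Ω → ℝ) (hX : ∀ n, Measurable (X n))
    (hmono : ∀ᵐ ω ∂μ, (Monotone fun n => X n ω) ∨ (Antitone fun n => X n ω))
    (h : ℝ → ℝ) (hh1 : ∀ lam ∈ Set.Ioo (0 : ℝ) 1, 1 ≤ h lam)
    (htight : ∀ lam ∈ Set.Ioo (0 : ℝ) 1, ∀ n : ℕ,
      μ {ω | h lam ≤ |X n ω|} < ENNReal.ofReal lam) :
    (∀ lam ∈ Set.Ioo (0 : ℝ) 1, ∀ eps ∈ Set.Ioo (0 : ℝ) 1, ∀ a b : ℕ → ℕ,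
      (∀ n, a n < b n) → (∀ n, b n ≤ a (n + 1)) →
      ∃ n : ℕ, (n : ℝ) ≤ 22 / (lam * eps) * h (lam / 2) ∧
        μ {ω | ∃ i ∈ Set.Icc (a n) (b n), ∃ j ∈ Set.Icc (a n) (b n), eps ≤ |X i ω - X j ω|}
          < ENNReal.ofReal lam) ∧
    (∀ K : ℝ, 1 ≤ K → (∀ n, eLpNorm (X n) ⊤ μ < ENNReal.ofReal K) →
      ∀ lam ∈ Set.Ioo (0 : ℝ) 1, ∀ eps ∈ Set.Ioo (0 : ℝ) 1, ∀ a b : ℕ → ℕ,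
        (∀ n, a n < b n) → (∀ n, b n ≤ a (n + 1)) →
        ∃ n : ℕ, (n : ℝ) ≤ 22 * K / (lam * eps) ∧
          μ {ω | ∃ i ∈ Set.Icc (a n) (b n), ∃ j ∈ Set.Icc (a n) (b n), eps ≤ |X i ω - X j ω|}
            < ENNReal.ofReal lam) := by
  constructor
  · exact aux14 μ X hX hmono h hh1 htight
  · intro K hK hKb lam hlam eps heps a b hab hba
    have htight' : ∀ lam ∈ Set.Ioo (0 : ℝ) 1, ∀ n : ℕ,
        μ {ω | (fun _ => K) lam ≤ |X n ω|} < ENNReal.ofReal lam := by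
      intro lam' hlam' n
      have hae : ∀ᵐ ω ∂μ, |X n ω| < K := by
        have h1 := hKb n
        rw [eLpNorm_exponent_top] at h1
        filter_upwards [ae_le_eLpNormEssSup (f := X n) (μ := μ)] with ω hω
        have h2 : (‖X n ω‖₊ : ℝ≥0∞) < ENNReal.ofReal K := lt_of_le_of_lt hω h1
        rw [← enorm_eq_nnnorm, Real.enorm_eq_ofReal_abs] at h2
        exact (ENNReal.ofReal_lt_ofReal_iff (by linarith)).1 h2
      have h0 : μ {ω | K ≤ |X n ω|} = 0 := by
        have : {ω | K ≤ |X n ω|} = {ω | ¬ |X n ω| < K} := by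
          ext ω; simp [not_lt]
        rw [this]
        exact ae_iff.1 hae
      simp only
      rw [h0]
      exact ENNReal.ofReal_pos.2 hlam'.1
    obtain ⟨n, hn1, hn2⟩ := aux14 μ X hX hmono (fun _ => K) (fun _ _ => hK) htight'
      lam hlam eps heps a b hab hba
    refine ⟨n, ?_, hn2⟩
    calc (n:ℝ) ≤ 22 / (lam * eps) * K := hn1
      _ = 22 * K / (lam * eps) := by ring
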